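/- Let g be a finite idempotent of the symmetric inverse monoid I_ℕ (i.e., a restriction of the identity to a finite set). For a finite subset X of ℕ, let i_X : ℕ → ℕ \ X be the unique order isomorphism. Define d_g on the set ↑g = {h ∈ I_ℕ : g ⊆ h} by (h)d_g = i_{dom(g)} ∘ h ∘ i_{im(g)}^{-1}. Then d_g is a semigroup isomorphism from ↑g (which is closed under composition) onto I_ℕ. -/

import Mathlib

open Set Classical

noncomputable section

/-- A partial injection (partial bijection) on ℕ, viewed as a set of pairs. -/
def IsPInj (g : Set (ℕ × ℕ)) : Prop :=
  ∀ ⦃a b c d : ℕ⦄, (a, b) ∈ g → (c, d) ∈ g → (a = c ↔ b = d)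

/-- Domain of a partial injection. -/
def pdom (g : Set (ℕ × ℕ)) : Set ℕ := {x | ∃ y, (x, y) ∈ g}

/-- Image of a partial injection. -/
def pim (g : Set (ℕ × ℕ)) : Set ℕ := {y | ∃ x, (x, y) ∈ g}

/-- Restriction of a partial injection to `{0, …, r-1}`. -/
def pres (g : Set (ℕ × ℕ)) (r : ℕ) : Set (ℕ × ℕ) := {p ∈ g | p.1 < r}

/-- A waning function `f : ω + 1 → ω + 1`. -/
def Waning (f : ℕ∞ → ℕ∞) : Prop :=
  Antitone f ∧
    ((∀ i, f i = ⊤) ∨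
      ((∃ i : ℕ, f i ≠ ⊤) ∧
        ∀ j : ℕ, f j ≠ 0 → f j ≠ ⊤ → f ((j + 1 : ℕ)) < f j))

/-- Composition of partial injections, as relations (apply the left one first,
following the paper's left-to-right convention). -/
def pcomp (g h : Set (ℕ × ℕ)) : Set (ℕ × ℕ) := {p | ∃ b, (p.1, b) ∈ g ∧ (b, p.2) ∈ h}

/-- For a finite idempotent `g` of `I_ℕ` (a partial identity), the map
`d_g : ↑g → I_ℕ`, `h ↦ i_{dom g} ∘ h ∘ i_{im g}⁻¹`, is a semigroup isomorphism from
`↑g = {h : g ⊆ h}` onto `I_ℕ`.  Here `iD` (resp. `iI`) is the unique order isomorphism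
from `ℕ` onto `ℕ \ dom g` (resp. `ℕ \ im g`). -/
theorem dg_is_isomorphism (g : Set (ℕ × ℕ)) (hg : IsPInj g) (hfin : g.Finite)
    (hid : ∀ p ∈ g, (p : ℕ × ℕ).1 = p.2)
    (iD iI : ℕ → ℕ)
    (hD : StrictMono iD) (hDr : Set.range iD = (pdom g)ᶜ)
    (hI : StrictMono iI) (hIr : Set.range iI = (pim g)ᶜ) :
    (∀ h, g ⊆ h → IsPInj h → IsPInj {p : ℕ × ℕ | (iD p.1, iI p.2) ∈ h}) ∧
    (∀ h k, g ⊆ h → g ⊆ k → IsPInj h → IsPInj k →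
      {p : ℕ × ℕ | (iD p.1, iI p.2) ∈ pcomp h k} =
        pcomp {p : ℕ × ℕ | (iD p.1, iI p.2) ∈ h} {p : ℕ × ℕ | (iD p.1, iI p.2) ∈ k}) ∧
    Set.BijOn (fun h => {p : ℕ × ℕ | (iD p.1, iI p.2) ∈ h})
      {h | g ⊆ h ∧ IsPInj h} {h | IsPInj h} := by
  -- `g` is a partial identity, so its domain and image coincide.
  have hDI : pdom g = pim g := by
    ext x
    constructor
    · rintro ⟨y, hy⟩
      have h' : x = y := hid _ hy
      subst h'
      exact ⟨x, hy⟩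
    · rintro ⟨y, hy⟩
      have h' : y = x := hid _ hy
      rw [h'] at hy
      exact ⟨x, hy⟩
  -- hence iD = iI
  have hEq : iD = iI := (hD.range_inj hI).mp (by rw [hDr, hIr, hDI])
  subst hEq
  have hnd : ∀ a, iD a ∉ pdom g := fun a h => by
    have : iD a ∈ (pdom g)ᶜ := hDr ▸ Set.mem_range_self a
    exact this h
  have hni : ∀ a, iD a ∉ pim g := fun a h => hnd a (hDI ▸ h)
  have hdiag : ∀ x, x ∈ pdom g → (x, x) ∈ g := by
    rintro x ⟨y, hy⟩
    have := hid _ hy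
    simp only at this
    exact this ▸ hy
  -- Lemma B: points of `h` over the domain of `g` lie in `g`.
  have lemB : ∀ h : Set (ℕ × ℕ), g ⊆ h → IsPInj h → ∀ {x y : ℕ}, (x, y) ∈ h →
      x ∈ pdom g → (x, y) ∈ g := by
    intro h hgh hP x y hxy hx
    have hxx : (x, x) ∈ h := hgh (hdiag x hx)
    have hyx : y = x := (hP hxy hxx).mp rfl
    rw [hyx]
    exact hdiag x hx
  -- Lemma A: points of `h` outside the domain of `g` miss its image too.
  have lemA : ∀ h : Set (ℕ × ℕ), g ⊆ h → IsPInj h → ∀ {x y : ℕ}, (x, y) ∈ h →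
      x ∉ pdom g → y ∉ pim g := by
    intro h hgh hP x y hxy hx hy
    have hy' : y ∈ pdom g := hDI ▸ hy
    have hyy : (y, y) ∈ h := hgh (hdiag y hy')
    have : x = y := (hP hxy hyy).mpr rfl
    exact hx (this ▸ hy')
  -- elements outside pdom g are in range iD
  have hrange : ∀ x : ℕ, x ∉ pdom g → ∃ a, iD a = x := by
    intro x hx
    have : x ∈ Set.range iD := hDr ▸ hx
    exact this
  have part1 : ∀ h, g ⊆ h → IsPInj h → IsPInj {p : ℕ × ℕ | (iD p.1, iD p.2) ∈ h} := by
    intro h hgh hP a b c d hab hcd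
    have := hP hab hcd
    constructor
    · intro hac; exact hD.injective (this.mp (hac ▸ rfl))
    · intro hbd; exact hD.injective (this.mpr (hbd ▸ rfl))
  refine ⟨part1, ?_, ?_, ?_, ?_⟩
  · -- composition
    intro h k hgh hgk hPh hPk
    ext ⟨a, c⟩
    simp only [pcomp, Set.mem_setOf_eq]
    constructor
    · rintro ⟨b, hb1, hb2⟩
      have hbnot : b ∉ pdom g := by
        intro hb
        have := lemB k hgk hPk hb2 hb
        have : b = iD c := hid _ this
        exact hnd c (this ▸ hb)
      obtain ⟨b', rfl⟩ := hrange b hbnot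
      exact ⟨b', hb1, hb2⟩
    · rintro ⟨b, hb1, hb2⟩
      exact ⟨iD b, hb1, hb2⟩
  · -- MapsTo
    intro h hh
    exact part1 h hh.1 hh.2
  · -- InjOn
    intro h hh k hk he
    have key : ∀ h k : Set (ℕ × ℕ), g ⊆ h → IsPInj h → g ⊆ k → IsPInj k →
        {p : ℕ × ℕ | (iD p.1, iD p.2) ∈ h} = {p : ℕ × ℕ | (iD p.1, iD p.2) ∈ k} →
        h ⊆ k := by
      intro h k hgh hPh hgk hPk he
      rintro ⟨x, y⟩ hxy
      by_cases hx : x ∈ pdom g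
      · exact hgk (lemB h hgh hPh hxy hx)
      · obtain ⟨a, rfl⟩ := hrange x hx
        have hy : y ∉ pim g := lemA h hgh hPh hxy hx
        obtain ⟨b, rfl⟩ := hrange y (fun hy' => hy (hDI ▸ hy'))
        have : (a, b) ∈ {p : ℕ × ℕ | (iD p.1, iD p.2) ∈ h} := hxy
        rw [he] at this
        exact this
    exact Set.Subset.antisymm (key h k hh.1 hh.2 hk.1 hk.2 he)
      (key k h hk.1 hk.2 hh.1 hh.2 he.symm)
  · -- SurjOn
    intro m hm
    refine ⟨g ∪ (fun p : ℕ × ℕ => (iD p.1, iD p.2)) '' m, ⟨Set.subset_union_left, ?_⟩, ?_⟩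
    · rintro a b c d (hab | ⟨⟨a', b'⟩, hab', heq⟩) (hcd | ⟨⟨c', d'⟩, hcd', heq'⟩)
      · exact hg hab hcd
      · obtain ⟨rfl, rfl⟩ : iD c' = c ∧ iD d' = d := by simpa [Prod.ext_iff] using heq'
        have hab' : a = b := hid _ hab
        have h1 : a ≠ iD c' := fun h => hnd c' (h ▸ ⟨b, hab⟩)
        have h2 : b ≠ iD d' := fun h => hni d' (h ▸ ⟨a, hab⟩)
        exact ⟨fun h => absurd h h1, fun h => absurd h h2⟩
      · obtain ⟨rfl, rfl⟩ : iD a' = a ∧ iD b' = b := by simpa [Prod.ext_iff] using heq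
        have h1 : c ≠ iD a' := fun h => hnd a' (h ▸ ⟨d, hcd⟩)
        have h2 : d ≠ iD b' := fun h => hni b' (h ▸ ⟨c, hcd⟩)
        exact ⟨fun h => absurd h.symm h1, fun h => absurd h.symm h2⟩
      · obtain ⟨rfl, rfl⟩ := Prod.mk.injEq .. ▸ heq
        obtain ⟨rfl, rfl⟩ := Prod.mk.injEq .. ▸ heq'
        have := hm hab' hcd'
        simp only
        constructor
        · intro h; exact congrArg iD (this.mp (hD.injective h))
        · intro h; exact congrArg iD (this.mpr (hD.injective h))
    · ext ⟨a, b⟩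
      simp only [Set.mem_setOf_eq, Set.mem_union, Set.mem_image]
      constructor
      · rintro (h | ⟨⟨a', b'⟩, hab', heq⟩)
        · exact absurd ⟨iD b, h⟩ (hnd a)
        · obtain ⟨h1, h2⟩ : iD a' = iD a ∧ iD b' = iD b := by simpa [Prod.ext_iff] using heq
          rwa [hD.injective h1, hD.injective h2] at hab'
      · intro h
        exact Or.inr ⟨(a, b), h, rfl⟩
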